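/- There exists a constant C > 0 such that for all t > 0 and all ε ≥ 0, (√t / π) · ∫_0^∞ ((1 − e^{−ε y²/(2t)})/y)² · e^{−y²} dy ≤ C · √ε · min(1, (ε/t)^{3/2}). -/

import Mathlib

open Real MeasureTheory

private lemma aux_one_sub_exp_nonneg {x : ℝ} (hx : 0 ≤ x) : 0 ≤ 1 - Real.exp (-x) := by
  have := Real.exp_le_one_iff.2 (neg_nonpos.2 hx)
  linarith

private lemma aux_one_sub_exp_le {x : ℝ} : 1 - Real.exp (-x) ≤ x := by
  have := Real.add_one_le_exp (-x)
  linarith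

private lemma aux_sq_le_exp_half {x : ℝ} (hx : 0 ≤ x) : x ≤ Real.exp (x / 2) := by
  have h1 : 1 + x / 4 ≤ Real.exp (x / 4) := by
    have := Real.add_one_le_exp (x / 4); linarith
  have h2 : Real.exp (x / 2) = Real.exp (x / 4) * Real.exp (x / 4) := by
    rw [← Real.exp_add]; ring_nf
  nlinarith [Real.exp_pos (x / 4), sq_nonneg (1 - x / 4)]

set_option maxHeartbeats 1000000 in
/-- The squared canonical distance of the auxiliary Gaussian process satisfies
(√t/π) ∫_0^∞ ((1 − e^{−ε y²/(2t)})/y)² e^{−y²} dy ≤ C √ε min(1, (ε/t)^{3/2}). -/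
theorem stmt_2 :
    ∃ C > (0 : ℝ), ∀ t > (0 : ℝ), ∀ ε ≥ (0 : ℝ),
      (Real.sqrt t / π) *
          ∫ y in Set.Ioi (0 : ℝ),
            ((1 - Real.exp (-ε * y ^ 2 / (2 * t))) / y) ^ 2 * Real.exp (-y ^ 2)
        ≤ C * Real.sqrt ε * min 1 ((ε / t) ^ ((3 : ℝ) / 2)) := by
  refine ⟨1, one_pos, fun t ht ε hε => ?_⟩
  have ht2 : (0 : ℝ) < 2 * t := by linarith
  obtain ⟨a, ha_def⟩ : ∃ a : ℝ, a = ε / (2 * t) := ⟨_, rfl⟩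
  have ha : 0 ≤ a := ha_def ▸ div_nonneg hε ht2.le
  have harg : ∀ y : ℝ, -ε * y ^ 2 / (2 * t) = -(a * y ^ 2) := by
    intro y; rw [ha_def]; field_simp
  have hπ : (0 : ℝ) < π := Real.pi_pos
  rcases le_or_gt ε t with hle | hlt
  · -- case ε ≤ t
    have hmin : min 1 ((ε / t) ^ ((3 : ℝ) / 2)) = (ε / t) ^ ((3 : ℝ) / 2) :=
      min_eq_right (Real.rpow_le_one (div_nonneg hε ht.le) ((div_le_one ht).2 hle)
        (by norm_num))
    rw [hmin, one_mul]
    have hbound : (∫ y in Set.Ioi (0 : ℝ),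
        ((1 - Real.exp (-ε * y ^ 2 / (2 * t))) / y) ^ 2 * Real.exp (-y ^ 2))
        ≤ ∫ y in Set.Ioi (0 : ℝ), a ^ 2 * Real.exp (-(1/2) * y ^ 2) := by
      apply integral_mono_of_nonneg
      · exact Filter.Eventually.of_forall fun y => by positivity
      · exact ((integrable_exp_neg_mul_sq (by norm_num : (0:ℝ) < 1/2)).const_mul
          (a ^ 2)).integrableOn
      · filter_upwards [ae_restrict_mem measurableSet_Ioi] with y hy
        have hy0 : (0 : ℝ) < y := hy
        rw [harg y]
        have h1 : 0 ≤ 1 - Real.exp (-(a * y ^ 2)) :=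
          aux_one_sub_exp_nonneg (by positivity)
        have h2 : 1 - Real.exp (-(a * y ^ 2)) ≤ a * y ^ 2 := aux_one_sub_exp_le
        have hq : ((1 - Real.exp (-(a * y ^ 2))) / y) ^ 2 ≤ (a * y) ^ 2 := by
          apply pow_le_pow_left₀ (div_nonneg h1 hy0.le)
          rw [div_le_iff₀ hy0]
          nlinarith
        calc ((1 - Real.exp (-(a * y ^ 2))) / y) ^ 2 * Real.exp (-y ^ 2)
            ≤ (a * y) ^ 2 * Real.exp (-y ^ 2) :=
              mul_le_mul_of_nonneg_right hq (Real.exp_nonneg _)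
          _ = a ^ 2 * (y ^ 2 * Real.exp (-y ^ 2)) := by ring
          _ ≤ a ^ 2 * Real.exp (-(1/2) * y ^ 2) := by
              apply mul_le_mul_of_nonneg_left _ (by positivity)
              have hkey : y ^ 2 ≤ Real.exp (y ^ 2 / 2) := aux_sq_le_exp_half (by positivity)
              have hsplit : Real.exp (-y ^ 2) =
                  Real.exp (-(1/2) * y ^ 2) / Real.exp (y ^ 2 / 2) := by
                rw [← Real.exp_sub]; ring_nf
              rw [hsplit, mul_div_assoc']
              rw [div_le_iff₀ (Real.exp_pos _)]
              calc y ^ 2 * Real.exp (-(1/2) * y ^ 2)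
                  ≤ Real.exp (y ^ 2 / 2) * Real.exp (-(1/2) * y ^ 2) :=
                    mul_le_mul_of_nonneg_right hkey (Real.exp_nonneg _)
                _ = Real.exp (-(1/2) * y ^ 2) * Real.exp (y ^ 2 / 2) := by ring
    have hval : (∫ y in Set.Ioi (0 : ℝ), a ^ 2 * Real.exp (-(1/2) * y ^ 2))
        = a ^ 2 * (Real.sqrt (π / (1/2)) / 2) := by
      rw [MeasureTheory.integral_const_mul, integral_gaussian_Ioi]
    have hA : (Real.sqrt t / π) *
        ∫ y in Set.Ioi (0 : ℝ),
          ((1 - Real.exp (-ε * y ^ 2 / (2 * t))) / y) ^ 2 * Real.exp (-y ^ 2)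
        ≤ (Real.sqrt t / π) * (a ^ 2 * (Real.sqrt (π / (1/2)) / 2)) := by
      rw [← hval]
      exact mul_le_mul_of_nonneg_left hbound (by positivity)
    refine hA.trans ?_
    have hε32 : Real.sqrt ε * ε ^ ((3:ℝ)/2) = ε ^ 2 := by
      rw [Real.sqrt_eq_rpow, ← Real.rpow_add' hε (by norm_num : (1:ℝ)/2 + (3:ℝ)/2 ≠ 0),
        show (1:ℝ)/2 + (3:ℝ)/2 = 2 by norm_num, Real.rpow_two]
    have hrhs : Real.sqrt ε * (ε / t) ^ ((3 : ℝ) / 2) = ε ^ 2 / t ^ ((3 : ℝ) / 2) := by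
      rw [Real.div_rpow hε ht.le, ← mul_div_assoc, hε32]
    rw [hrhs]
    have ha2 : a ^ 2 = ε ^ 2 / (4 * t ^ 2) := by
      rw [ha_def, div_pow]; congr 1; ring
    have hst : Real.sqrt t * t ^ ((3 : ℝ) / 2) = t ^ 2 := by
      rw [Real.sqrt_eq_rpow, ← Real.rpow_add ht,
        show (1:ℝ)/2 + (3:ℝ)/2 = 2 by norm_num, Real.rpow_two]
    have hs : (0 : ℝ) < Real.sqrt t := Real.sqrt_pos.2 ht
    have htp : (0 : ℝ) < t ^ ((3 : ℝ) / 2) := Real.rpow_pos_of_pos ht _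
    have hsπ : Real.sqrt (π / (1/2)) ≤ 8 * π :=
      (Real.sqrt_le_left (by positivity)).2 (by nlinarith [Real.pi_gt_three, hπ])
    have key : Real.sqrt t / t ^ 2 = 1 / t ^ ((3:ℝ)/2) := by
      rw [← hst]
      rw [div_eq_div_iff (by positivity) htp.ne']
      ring
    calc Real.sqrt t / π * (a ^ 2 * (Real.sqrt (π / (1/2)) / 2))
        = ε ^ 2 * Real.sqrt (π / (1/2)) * (Real.sqrt t / (8 * π * t ^ 2)) := by
          rw [ha2]; field_simp; ring
      _ ≤ ε ^ 2 * (8 * π) * (Real.sqrt t / (8 * π * t ^ 2)) := by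
          apply mul_le_mul_of_nonneg_right _ (by positivity)
          exact mul_le_mul_of_nonneg_left hsπ (by positivity)
      _ = ε ^ 2 * (Real.sqrt t / t ^ 2) := by field_simp
      _ = ε ^ 2 / t ^ ((3:ℝ)/2) := by rw [key]; ring
  · -- case t < ε
    have hε0 : (0 : ℝ) < ε := ht.trans hlt
    have ha0 : (0 : ℝ) < a := ha_def ▸ div_pos hε0 ht2
    have hmin : min 1 ((ε / t) ^ ((3 : ℝ) / 2)) = 1 :=
      min_eq_left (Real.one_le_rpow ((one_le_div ht).2 hlt.le) (by norm_num))
    rw [hmin, one_mul, mul_one]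
    obtain ⟨s, hs_def⟩ : ∃ s : ℝ, s = Real.sqrt a := ⟨_, rfl⟩
    have hs0 : (0 : ℝ) < s := hs_def ▸ Real.sqrt_pos.2 ha0
    obtain ⟨c, hc_def⟩ : ∃ c : ℝ, c = s⁻¹ := ⟨_, rfl⟩
    have hc0 : (0 : ℝ) < c := hc_def ▸ inv_pos.2 hs0
    have hc2 : c ^ 2 = a⁻¹ := by
      rw [hc_def, inv_pow, hs_def, Real.sq_sqrt ha]
    obtain ⟨g, hg_def⟩ : ∃ g : ℝ → ℝ,
        g = fun y => if y ≤ c then a else y ^ (-2 : ℝ) := ⟨_, rfl⟩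
    have hsplitset : Set.Ioi (0 : ℝ) = Set.Ioc 0 c ∪ Set.Ioi c :=
      (Set.Ioc_union_Ioi_eq_Ioi hc0.le).symm
    have hg1 : IntegrableOn g (Set.Ioc 0 c) := by
      apply (integrableOn_const (C := a) measure_Ioc_lt_top.ne).congr_fun
        _ measurableSet_Ioc
      intro y hy
      simp [hg_def, hy.2]
    have hg2 : IntegrableOn g (Set.Ioi c) := by
      apply (integrableOn_Ioi_rpow_of_lt (by norm_num : (-2 : ℝ) < -1) hc0).congr_fun
        _ measurableSet_Ioi
      intro y hy
      simp [hg_def, not_le.2 (Set.mem_Ioi.1 hy)]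
    have hgint : IntegrableOn g (Set.Ioi (0 : ℝ)) := by
      rw [hsplitset]; exact hg1.union hg2
    have hbound : (∫ y in Set.Ioi (0 : ℝ),
        ((1 - Real.exp (-ε * y ^ 2 / (2 * t))) / y) ^ 2 * Real.exp (-y ^ 2))
        ≤ ∫ y in Set.Ioi (0 : ℝ), g y := by
      apply integral_mono_of_nonneg
      · exact Filter.Eventually.of_forall fun y => by positivity
      · exact hgint
      · filter_upwards [ae_restrict_mem measurableSet_Ioi] with y hy
        have hy0 : (0 : ℝ) < y := hy
        rw [harg y]
        have h1 : 0 ≤ 1 - Real.exp (-(a * y ^ 2)) :=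
          aux_one_sub_exp_nonneg (by positivity)
        have h2 : 1 - Real.exp (-(a * y ^ 2)) ≤ a * y ^ 2 := aux_one_sub_exp_le
        have hexp1 : Real.exp (-y ^ 2) ≤ 1 := Real.exp_le_one_iff.2 (neg_nonpos.2 (by positivity))
        by_cases hyc : y ≤ c
        · have hq : ((1 - Real.exp (-(a * y ^ 2))) / y) ^ 2 ≤ (a * y) ^ 2 := by
            apply pow_le_pow_left₀ (div_nonneg h1 hy0.le)
            rw [div_le_iff₀ hy0]; nlinarith
          have hac : (a * c) ^ 2 = a := by
            rw [mul_pow, hc2]; field_simp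
          have hb1 : ((1 - Real.exp (-(a * y ^ 2))) / y) ^ 2 * Real.exp (-y ^ 2)
              ≤ (a * y) ^ 2 := by
            nlinarith [Real.exp_nonneg (-y ^ 2), sq_nonneg ((1 - Real.exp (-(a * y ^ 2))) / y)]
          refine hb1.trans ?_
          have hb2 : (a * y) ^ 2 ≤ (a * c) ^ 2 := by
            apply pow_le_pow_left₀ (by positivity)
            exact mul_le_mul_of_nonneg_left hyc ha0.le
          rw [hg_def]
          simp only [hyc, if_true]
          linarith
        · have hyc' : c < y := not_le.1 hyc
          have h3 : 1 - Real.exp (-(a * y ^ 2)) ≤ 1 := by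
            linarith [Real.exp_nonneg (-(a * y ^ 2))]
          have hq : ((1 - Real.exp (-(a * y ^ 2))) / y) ^ 2 ≤ (1 / y) ^ 2 := by
            apply pow_le_pow_left₀ (div_nonneg h1 hy0.le)
            gcongr
          have hrpow : y ^ (-2 : ℝ) = (1 / y) ^ 2 := by
            rw [Real.rpow_neg hy0.le, Real.rpow_two]
            field_simp
          rw [hg_def]
          simp only [hyc, if_false]
          rw [hrpow]
          nlinarith [sq_nonneg ((1 - Real.exp (-(a * y ^ 2))) / y),
            Real.exp_nonneg (-y ^ 2), sq_nonneg (1 / y)]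
    have hgval : (∫ y in Set.Ioi (0 : ℝ), g y) ≤ 2 * s := by
      rw [hsplitset, setIntegral_union (Set.Ioc_disjoint_Ioi le_rfl)
        measurableSet_Ioi hg1 hg2]
      have hv1 : (∫ y in Set.Ioc (0 : ℝ) c, g y) = c * a := by
        rw [setIntegral_congr_fun measurableSet_Ioc
          (g := fun _ => a) (fun y hy => by simp [hg_def, hy.2])]
        simp [Real.volume_Ioc, hc0.le, smul_eq_mul, ENNReal.toReal_ofReal]
      have hv2 : (∫ y in Set.Ioi c, g y) = s := by
        rw [setIntegral_congr_fun measurableSet_Ioi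
          (g := fun y => y ^ (-2 : ℝ)) (fun y hy => by
            simp [hg_def, not_le.2 (Set.mem_Ioi.1 hy)]),
          integral_Ioi_rpow_of_lt (by norm_num) hc0]
        norm_num [Real.rpow_neg_one, hc_def]
      rw [hv1, hv2]
      have hca : c * a = s := by
        rw [hc_def, hs_def, inv_mul_eq_div, Real.div_sqrt]
      rw [hca]; linarith
    have hIa : (∫ y in Set.Ioi (0 : ℝ),
        ((1 - Real.exp (-ε * y ^ 2 / (2 * t))) / y) ^ 2 * Real.exp (-y ^ 2)) ≤ 2 * s :=
      hbound.trans hgval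
    have hsqt : (0:ℝ) < Real.sqrt t := Real.sqrt_pos.2 ht
    have hst : Real.sqrt t * s = Real.sqrt ε / Real.sqrt 2 := by
      rw [hs_def, ha_def, Real.sqrt_div hε (2 * t),
        Real.sqrt_mul (by norm_num : (0:ℝ) ≤ 2) t]
      have h2 : (0:ℝ) < Real.sqrt 2 := by positivity
      field_simp
    have hsqrt2 : (1:ℝ) ≤ Real.sqrt 2 := by
      rw [show (1:ℝ) = Real.sqrt 1 by simp]
      exact Real.sqrt_le_sqrt (by norm_num)
    have hπ3 : (3:ℝ) ≤ π := Real.pi_gt_three.le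
    calc (Real.sqrt t / π) *
        ∫ y in Set.Ioi (0 : ℝ),
          ((1 - Real.exp (-ε * y ^ 2 / (2 * t))) / y) ^ 2 * Real.exp (-y ^ 2)
        ≤ (Real.sqrt t / π) * (2 * s) := by
          exact mul_le_mul_of_nonneg_left hIa (by positivity)
      _ = 2 * (Real.sqrt t * s) / π := by ring
      _ = 2 * (Real.sqrt ε / Real.sqrt 2) / π := by rw [hst]
      _ ≤ Real.sqrt ε := by
          have h2 : (0:ℝ) < Real.sqrt 2 := by positivity
          rw [div_le_iff₀ hπ]
          rw [show 2 * (Real.sqrt ε / Real.sqrt 2) = 2 * Real.sqrt ε / Real.sqrt 2 by ring,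
            div_le_iff₀ h2]
          have hps : (2:ℝ) ≤ π * Real.sqrt 2 := by nlinarith
          nlinarith [Real.sqrt_nonneg ε]
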